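/- Let m ≥ 2, n ≥ 1, and 1 ≤ k ≤ n be integers, and let p be a positive integer coprime to m·n. Set ζ = exp(2πi·p/(m·n)) ∈ ℂ and, for an integer j, set μ_j = exp(2πi·j/m) ∈ ℂ. Then the complex number D = m · (ζ^k − 1) · Π_{j=1}^{n−k} (ζ^{m·j} − 1) is nonzero, and ζ^{k + m·k(k−1)/2} · (ζ^{n−k} − μ_p) · ( Π_{i=k}^{n−1} (ζ^{m·i} − 1) ) · ( Π_{j ∈ {0,…,m−1}, j ≠ p mod m} (ζ^{n} − μ_j) ) / D = (−1)^k. -/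

import Mathlib

open Finset Polynomial


-- Lemma B: product over erased root
lemma aux_B {m r : ℕ} (hm : 0 < m) (hr : r < m) {ξ : ℂ} (hξ : IsPrimitiveRoot ξ m) :
    ∏ j ∈ (Finset.range m).erase r, (ξ ^ r - ξ ^ j) = m * ξ ^ (r * (m - 1)) := by
  have hpoly : (X ^ m - C 1 : ℂ[X]) = ∏ i ∈ Finset.range m, (X - C (ξ ^ i)) := by
    simpa using X_pow_sub_C_eq_prod hξ hm (one_pow m)
  have hsplit : ∏ i ∈ Finset.range m, (X - C (ξ ^ i))
      = (X - C (ξ ^ r)) * ∏ i ∈ (Finset.range m).erase r, (X - C (ξ ^ i)) :=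
    (Finset.mul_prod_erase _ _ (Finset.mem_range.mpr hr)).symm
  have hCm : (C (ξ ^ r) : ℂ[X]) ^ m = C 1 := by
    rw [← C_pow, ← pow_mul, mul_comm r m, pow_mul, hξ.pow_eq_one, one_pow]
  have hgeom : (∑ i ∈ Finset.range m, (X : ℂ[X]) ^ i * (C (ξ ^ r)) ^ (m - 1 - i)) * (X - C (ξ ^ r))
      = X ^ m - C 1 := by
    rw [geom_sum₂_mul, hCm]
  have hcancel : ∏ i ∈ (Finset.range m).erase r, (X - C (ξ ^ i))
      = ∑ i ∈ Finset.range m, (X : ℂ[X]) ^ i * (C (ξ ^ r)) ^ (m - 1 - i) := by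
    apply mul_right_cancel₀ (Polynomial.X_sub_C_ne_zero (ξ ^ r))
    rw [hgeom, hpoly, hsplit]; ring
  have := congrArg (Polynomial.eval (ξ ^ r)) hcancel
  simp only [eval_prod, eval_sub, eval_X, eval_C, eval_finset_sum, eval_mul, eval_pow] at this
  rw [this]
  have : ∀ i ∈ Finset.range m, (ξ ^ r) ^ i * (ξ ^ r) ^ (m - 1 - i) = ξ ^ (r * (m - 1)) := by
    intro i hi
    rw [← pow_add]
    have hi' : i + (m - 1 - i) = m - 1 := by have := Finset.mem_range.mp hi; omega
    rw [hi', ← pow_mul]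
  rw [Finset.sum_congr rfl this, Finset.sum_const, Finset.card_range, nsmul_eq_mul]


lemma aux_C {n k m : ℕ} (hk : 1 ≤ k) (hkn : k ≤ n) {ζ : ℂ} (hone : ζ ^ (m * n) = 1) :
    ζ ^ (m * ∑ j ∈ Icc 1 (n - k), j) * ∏ i ∈ Icc k (n - 1), (ζ ^ (m * i) - 1)
      = (-1) ^ (n - k) * ∏ j ∈ Icc 1 (n - k), (ζ ^ (m * j) - 1) := by
  have h1 : ∏ i ∈ Icc k (n - 1), (ζ ^ (m * i) - 1)
      = ∏ j ∈ Icc 1 (n - k), (ζ ^ (m * (n - j)) - 1) := by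
    apply Finset.prod_nbij' (fun i => n - i) (fun j => n - j)
    · intro a ha; simp only [mem_Icc] at *; omega
    · intro a ha; simp only [mem_Icc] at *; omega
    · intro a ha; simp only [mem_Icc] at ha; omega
    · intro a ha; simp only [mem_Icc] at ha; omega
    · intro a ha; simp only [mem_Icc] at ha
      have h : n - (n - a) = a := by omega
      rw [h]
  rw [h1, Finset.mul_sum, ← Finset.prod_pow_eq_pow_sum, ← Finset.prod_mul_distrib]
  have h2 : ∀ j ∈ Icc 1 (n - k), ζ ^ (m * j) * (ζ ^ (m * (n - j)) - 1)
      = (-1) * (ζ ^ (m * j) - 1) := by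
    intro j hj
    simp only [mem_Icc] at hj
    have : ζ ^ (m * j) * ζ ^ (m * (n - j)) = 1 := by
      rw [← pow_add]
      have hE : m * j + m * (n - j) = m * n := by
        have : j + (n - j) = n := by omega
        rw [← Nat.mul_add, this]
      rw [hE, hone]
    ring_nf
    linear_combination this
  rw [Finset.prod_congr rfl h2, Finset.prod_mul_distrib, Finset.prod_const, Nat.card_Icc]
  norm_num


lemma aux_sign {m n k : ℕ} (hm : 2 ≤ m) (hn : 1 ≤ n) (hk : 1 ≤ k) (hkn : k ≤ n) {ζ : ℂ}
    (hζ : IsPrimitiveRoot ζ (m * n)) :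
    ζ ^ (m * (k * (k - 1) / 2)) = (-1) ^ (n + 1) * ζ ^ (m * ∑ j ∈ Icc 1 (n - k), j) := by
  set S := ∑ j ∈ Icc 1 (n - k), j with hS
  set T := k * (k - 1) / 2 with hT
  have hone : ζ ^ (m * n) = 1 := hζ.pow_eq_one
  have emul : ∀ a b : ℕ, ζ ^ (m * n * a + b) = ζ ^ b := by
    intro a b; rw [pow_add, pow_mul, hone, one_pow, one_mul]
  have hS2 : S * 2 = (n - k + 1) * (n - k) := by
    have hins : Finset.range (n - k + 1) = insert 0 (Icc 1 (n - k)) := by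
      ext x; simp only [Finset.mem_range, Finset.mem_insert, mem_Icc]; omega
    have := Finset.sum_range_id_mul_two (n - k + 1)
    rw [hins, Finset.sum_insert (by simp)] at this
    simpa using this
  have hT2 : T * 2 = k * (k - 1) := by
    rw [hT]
    apply Nat.div_mul_cancel
    obtain ⟨k', rfl⟩ : ∃ k', k = k' + 1 := ⟨k - 1, by omega⟩
    simpa [mul_comm] using (Nat.even_mul_succ_self k').two_dvd
  have hkey : 2 * S + 2 * (n * k) = n * (n + 1) + 2 * T := by
    obtain ⟨d, rfl⟩ : ∃ d, n = k + d := ⟨n - k, by omega⟩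
    obtain ⟨k', rfl⟩ : ∃ k', k = k' + 1 := ⟨k - 1, by omega⟩
    have h1 : k' + 1 + d - (k' + 1) = d := by omega
    have h2 : k' + 1 - 1 = k' := by omega
    rw [h1] at hS2
    rw [h2] at hT2
    nlinarith [hS2, hT2]
  rcases Nat.even_or_odd n with he | ho
  · -- n even
    obtain ⟨l, hl⟩ := he
    have hl1 : 1 ≤ l := by omega
    have hml : ζ ^ (m * l) = -1 := by
      have h2 : ζ ^ (m * l) * ζ ^ (m * l) = 1 := by
        rw [← pow_add]
        have h3 : m * l + m * l = m * n := by rw [hl]; ring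
        rw [h3, hone]
      have hne : ζ ^ (m * l) ≠ 1 :=
        hζ.pow_ne_one_of_pos_of_lt (Nat.mul_pos (by omega) (by omega)).ne' (by nlinarith)
      rcases mul_self_eq_one_iff.mp h2 with h | h
      · exact absurd h hne
      · exact h
    have hexp : S + n * k = l * n + l + T := by
      have hnn : n * (n + 1) = 2 * (l * n) + 2 * l := by rw [hl]; ring
      omega
    have e2 : ζ ^ (m * S) = ζ ^ (m * l) * ζ ^ (m * T) := by
      calc ζ ^ (m * S) = ζ ^ (m * n * k + m * S) := (emul k (m * S)).symm
        _ = ζ ^ (m * n * l + (m * l + m * T)) := by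
            congr 1
            calc m * n * k + m * S = m * (S + n * k) := by ring
              _ = m * (l * n + l + T) := by rw [hexp]
              _ = m * n * l + (m * l + m * T) := by ring
        _ = ζ ^ (m * l + m * T) := emul l _
        _ = ζ ^ (m * l) * ζ ^ (m * T) := pow_add ζ _ _
    have hodd : ((-1 : ℂ)) ^ (n + 1) = -1 := Odd.neg_one_pow ⟨l, by omega⟩
    rw [hodd, e2, hml]; ring
  · -- n odd
    obtain ⟨l, hl⟩ := ho
    have hexp : S + n * k = n * (l + 1) + T := by
      have hnn : n * (n + 1) = 2 * (n * (l + 1)) := by rw [hl]; ring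
      omega
    have e2 : ζ ^ (m * S) = ζ ^ (m * T) := by
      calc ζ ^ (m * S) = ζ ^ (m * n * k + m * S) := (emul k (m * S)).symm
        _ = ζ ^ (m * n * (l + 1) + m * T) := by
            congr 1
            calc m * n * k + m * S = m * (S + n * k) := by ring
              _ = m * (n * (l + 1) + T) := by rw [hexp]
              _ = m * n * (l + 1) + m * T := by ring
        _ = ζ ^ (m * T) := emul (l + 1) _
    have heven : ((-1 : ℂ)) ^ (n + 1) = 1 := Even.neg_one_pow ⟨l + 1, by omega⟩
    rw [heven, one_mul, e2]



/-- Evaluation of the generic degree of `⋀^k V^{σ_p}` for `G(m,1,n)` at the primitive root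
of unity `ζ = ζ_{mn}^p`: the denominator `D = m·(ζ^k − 1)·Π_{j=1}^{n−k}(ζ^{mj} − 1)` is
nonzero and the quotient equals `(−1)^k`. -/
theorem generic_degree_eval_G_m_1_n (m n k p : ℕ) (hm : 2 ≤ m) (hn : 1 ≤ n)
    (hk1 : 1 ≤ k) (hkn : k ≤ n) (hp : 1 ≤ p) (hcop : Nat.Coprime p (m * n)) :
    let ζ : ℂ := Complex.exp (2 * Real.pi * Complex.I * p / (m * n))
    let μ : ℕ → ℂ := fun j => Complex.exp (2 * Real.pi * Complex.I * j / m)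
    let D : ℂ := m * (ζ ^ k - 1) * ∏ j ∈ Finset.Icc 1 (n - k), (ζ ^ (m * j) - 1)
    D ≠ 0 ∧
      ζ ^ (k + m * (k * (k - 1) / 2)) * (ζ ^ (n - k) - μ p) *
          (∏ i ∈ Finset.Icc k (n - 1), (ζ ^ (m * i) - 1)) *
          (∏ j ∈ (Finset.range m).filter (fun j => j ≠ p % m), (ζ ^ n - μ j)) / D =
        (-1) ^ k := by
  intro ζ μ D
  have hm0 : m ≠ 0 := by omega
  have hn0 : n ≠ 0 := by omega
  have hmn0 : m * n ≠ 0 := Nat.mul_ne_zero hm0 hn0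
  have hmC : (m : ℂ) ≠ 0 := Nat.cast_ne_zero.mpr hm0
  have hnC : (n : ℂ) ≠ 0 := Nat.cast_ne_zero.mpr hn0
  have hζprim : IsPrimitiveRoot ζ (m * n) := by
    have h := Complex.isPrimitiveRoot_exp_of_coprime p (m * n) hmn0 hcop
    convert h using 2
    push_cast
    ring
  have hξprim : IsPrimitiveRoot (μ 1) m := by
    have h := Complex.isPrimitiveRoot_exp m hm0
    convert h using 2
    push_cast
    ring
  have hζ0 : ζ ≠ 0 := Complex.exp_ne_zero _
  have hμpow : ∀ j : ℕ, μ j = (μ 1) ^ j := by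
    intro j
    simp only [μ, ← Complex.exp_nat_mul]
    congr 1
    push_cast
    ring
  have hζn : ζ ^ n = μ p := by
    simp only [ζ, μ, ← Complex.exp_nat_mul]
    congr 1
    field_simp
  set r := p % m with hrdef
  have hr : r < m := Nat.mod_lt _ (by omega)
  have hξp : (μ 1) ^ p = (μ 1) ^ r := by
    conv_lhs => rw [← Nat.div_add_mod p m]
    rw [pow_add, pow_mul, hξprim.pow_eq_one, one_pow, one_mul]
  have hζk : ζ ^ k - 1 ≠ 0 := by
    refine sub_ne_zero.mpr (hζprim.pow_ne_one_of_pos_of_lt (by omega) ?_)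
    nlinarith
  have hPden : ∀ j ∈ Finset.Icc 1 (n - k), ζ ^ (m * j) - 1 ≠ 0 := by
    intro j hj
    simp only [Finset.mem_Icc] at hj
    refine sub_ne_zero.mpr
      (hζprim.pow_ne_one_of_pos_of_lt (Nat.mul_pos (by omega) (by omega)).ne' ?_)
    have hjn : j < n := by omega
    nlinarith
  have hPdenne : (∏ j ∈ Finset.Icc 1 (n - k), (ζ ^ (m * j) - 1)) ≠ 0 :=
    Finset.prod_ne_zero_iff.mpr hPden
  have hD : D ≠ 0 := mul_ne_zero (mul_ne_zero hmC hζk) hPdenne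
  refine ⟨hD, ?_⟩
  rw [div_eq_iff hD]
  have hfilter : (∏ j ∈ (Finset.range m).filter (fun j => j ≠ r), (ζ ^ n - μ j))
      = m * ζ ^ (n * (m - 1)) := by
    have h1 : ∀ j ∈ (Finset.range m).filter (fun j => j ≠ r),
        ζ ^ n - μ j = (μ 1) ^ r - (μ 1) ^ j := by
      intro j hj
      rw [hμpow j, hζn, hμpow p, hξp]
    rw [Finset.prod_congr rfl h1, Finset.filter_ne', aux_B (by omega) hr hξprim]
    congr 1
    calc (μ 1) ^ (r * (m - 1)) = ((μ 1) ^ r) ^ (m - 1) := pow_mul _ _ _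
      _ = ((μ 1) ^ p) ^ (m - 1) := by rw [hξp]
      _ = (ζ ^ n) ^ (m - 1) := by rw [hζn, hμpow p]
      _ = ζ ^ (n * (m - 1)) := (pow_mul _ _ _).symm
  rw [hfilter]
  have hμp2 : μ p = ζ ^ (n - k) * ζ ^ k := by
    rw [← hζn, ← pow_add, Nat.sub_add_cancel hkn]
  rw [hμp2]
  set S := ∑ j ∈ Finset.Icc 1 (n - k), j with hSdef
  have hone : ζ ^ (m * n) = 1 := hζprim.pow_eq_one
  have hC := aux_C hk1 hkn (m := m) hone
  have hsign := aux_sign hm hn hk1 hkn hζprim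
  apply mul_left_cancel₀ (pow_ne_zero (m * S) hζ0)
  have hscal : ζ ^ (k + m * (k * (k - 1) / 2)) * (ζ ^ (n - k) - ζ ^ (n - k) * ζ ^ k) *
        (m * ζ ^ (n * (m - 1))) * (-1 : ℂ) ^ (n - k)
      = ζ ^ (m * S) * ((-1) ^ k * (m * (ζ ^ k - 1))) := by
    obtain ⟨c, hc⟩ : ∃ c, n = k + c := ⟨n - k, by omega⟩
    obtain ⟨m', hm'⟩ : ∃ m', m = m' + 1 := ⟨m - 1, by omega⟩
    have hnk : n - k = c := by omega
    have hm1 : m - 1 = m' := by omega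
    rw [hnk, hm1]
    have hcomb : ζ ^ (k + m * (k * (k - 1) / 2)) * ζ ^ c * ζ ^ (n * m')
        = ζ ^ (m * (k * (k - 1) / 2)) * ζ ^ (m * n) := by
      rw [← pow_add, ← pow_add, ← pow_add]
      congr 1
      have h4 : n * m' + n = m * n := by rw [hm']; ring
      omega
    have expand : ζ ^ (k + m * (k * (k - 1) / 2)) * (ζ ^ c - ζ ^ c * ζ ^ k) *
          ((m : ℂ) * ζ ^ (n * m')) * (-1 : ℂ) ^ c
        = (ζ ^ (k + m * (k * (k - 1) / 2)) * ζ ^ c * ζ ^ (n * m')) *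
          ((1 - ζ ^ k) * m * (-1 : ℂ) ^ c) := by ring
    rw [expand, hcomb, hone, mul_one, hsign]
    have hn1 : ((-1 : ℂ)) ^ (n + 1) = (-1) ^ k * (-1) ^ c * (-1) := by rw [hc]; ring
    rw [hn1]
    have hcc : ((-1 : ℂ)) ^ c * (-1) ^ c = 1 := by rw [← mul_pow]; norm_num
    linear_combination (-((-1 : ℂ) ^ k * ζ ^ (m * S) * (1 - ζ ^ k) * (m : ℂ))) * hcc
  linear_combination (ζ ^ (k + m * (k * (k - 1) / 2)) * (ζ ^ (n - k) - ζ ^ (n - k) * ζ ^ k) *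
      ((m : ℂ) * ζ ^ (n * (m - 1)))) * hC +
    (∏ j ∈ Finset.Icc 1 (n - k), (ζ ^ (m * j) - 1)) * hscal
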